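/- Let G be a planar graph on n vertices with n ≥ 2 that contains neither K4 nor C6 as a subgraph, and such that G contains no maximal 2-connected subgraph on more than 5 vertices. Then e(G) ≤ (31/15)n − 7/3. -/

import Mathlib

open SimpleGraph

namespace PlanarTuran

/-- Reversal of darts, as a permutation of the darts of `G`. -/
def dartRev {V : Type*} (G : SimpleGraph V) : Equiv.Perm G.Dart where
  toFun := Dart.symm
  invFun := Dart.symm
  left_inv d := Dart.symm_symm d
  right_inv d := Dart.symm_symm d

/-- A rotation system (combinatorial embedding) of a simple graph `G`: a permutation of the
darts which fixes the initial vertex of every dart and is a single cycle on the darts leaving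
each given vertex. -/
structure RotationSystem {V : Type*} (G : SimpleGraph V) where
  rot : Equiv.Perm G.Dart
  rot_fst : ∀ d : G.Dart, (rot d).fst = d.fst
  rot_cycle : ∀ d d' : G.Dart, d.fst = d'.fst → rot.SameCycle d d'

namespace RotationSystem

variable {V : Type*} {G : SimpleGraph V}

/-- The face permutation of the embedding: its orbits are the faces of the plane graph. -/
def facePerm (R : RotationSystem G) : Equiv.Perm G.Dart :=
  (dartRev G).trans R.rot

/-- The face containing (the side of) a dart, encoded as the set of darts on its boundary walk. -/
def faceOf (R : RotationSystem G) (d : G.Dart) : Set G.Dart :=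
  {d' | R.facePerm.SameCycle d d'}

/-- The length of the face incident to the dart `d`: the number of edge-sides on its
boundary walk (a bridge is counted twice). -/
noncomputable def faceLen (R : RotationSystem G) (d : G.Dart) : ℕ :=
  (R.faceOf d).ncard

/-- Darts lying on the same face. -/
def faceSetoid (R : RotationSystem G) : Setoid G.Dart :=
  ⟨R.facePerm.SameCycle,
   ⟨fun d => Equiv.Perm.SameCycle.refl _ d, fun h => h.symm, fun h h' => h.trans h'⟩⟩

/-- The number of faces of the embedded graph (only counting faces having at least one edge on
their boundary). -/
noncomputable def numFaces (R : RotationSystem G) : ℕ :=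
  Nat.card (Quotient R.faceSetoid)

/-- Darts on the same face, within the connected component `C`. -/
def faceSetoidIn (R : RotationSystem G) (C : G.ConnectedComponent) :
    Setoid {d : G.Dart // G.connectedComponentMk d.fst = C} :=
  ⟨fun d d' => R.facePerm.SameCycle d.1 d'.1,
   ⟨fun d => Equiv.Perm.SameCycle.refl _ _, fun h => h.symm, fun h h' => h.trans h'⟩⟩

/-- The rotation system is a *plane* (genus zero) embedding: every connected component
containing at least one edge satisfies Euler's formula `n - e + f = 2`
(written here as `2*n + 2*f = 2*e + 4`, where `2*e` is the number of darts). -/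
def GenusZero (R : RotationSystem G) : Prop :=
  ∀ C : G.ConnectedComponent, (∃ d : G.Dart, G.connectedComponentMk d.fst = C) →
    2 * Nat.card {v : V // G.connectedComponentMk v = C}
      + 2 * Nat.card (Quotient (R.faceSetoidIn C))
      = Nat.card {d : G.Dart // G.connectedComponentMk d.fst = C} + 4

/-- The contribution `f(e) = 1/l₁ + 1/l₂` of an edge `e` to the face number, where `l₁, l₂`
are the lengths of the faces incident to the two darts of `e` (for a bridge both darts lie
on the same face, giving `f(e) = 2/l`). -/
noncomputable def fEdge [Fintype V] [DecidableEq V] [DecidableRel G.Adj]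
    (R : RotationSystem G) (e : Sym2 V) : ℚ :=
  ∑ d ∈ Finset.univ.filter (fun d : G.Dart => d.edge = e), (1 : ℚ) / (R.faceLen d)

/-- The edges `e₁` and `e₂` both lie on a common `3`-face. -/
def shares3Face (R : RotationSystem G) (e₁ e₂ : Sym2 V) : Prop :=
  ∃ d₁ d₂ : G.Dart, d₁.edge = e₁ ∧ d₂.edge = e₂ ∧ R.faceLen d₁ = 3 ∧
    R.facePerm.SameCycle d₁ d₂

/-- The triangular block generated by an edge `e`: the closure of `{e}` under adding all
edges of any `3`-face containing an edge already present. -/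
def triBlockOf (R : RotationSystem G) (e : Sym2 V) : Set (Sym2 V) :=
  {e' | Relation.ReflTransGen R.shares3Face e e'}

/-- `B` is a triangular block of the plane graph `G`. -/
def IsTriangularBlock (R : RotationSystem G) (B : Set (Sym2 V)) : Prop :=
  ∃ e ∈ G.edgeSet, B = R.triBlockOf e

end RotationSystem

/-- A graph is planar iff it admits a genus-zero rotation system. -/
def _root_.SimpleGraph.IsPlanar {V : Type*} (G : SimpleGraph V) : Prop :=
  ∃ R : RotationSystem G, R.GenusZero

/-- `G` contains no cycle of length `k`; equivalently, no subgraph isomorphic to `C_k`. -/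
def _root_.SimpleGraph.CycleFree {V : Type*} (G : SimpleGraph V) (k : ℕ) : Prop :=
  ∀ ⦃v : V⦄ (w : G.Walk v v), w.IsCycle → w.length ≠ k

/-- A graph is 2-connected if it has at least 3 vertices and deleting any single vertex
leaves it connected. -/
def _root_.SimpleGraph.IsTwoConnected {V : Type*} (G : SimpleGraph V) : Prop :=
  3 ≤ Nat.card V ∧ ∀ v : V, (G.induce {u | u ≠ v}).Connected

/-- The set of vertices covered by a set `B` of edges. -/
def blockVerts {V : Type*} (B : Set (Sym2 V)) : Set V :=
  {v | ∃ e ∈ B, v ∈ e}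

/-- An edge set forming a single edge `K₂`. -/
def IsK2Block {V : Type*} (B : Set (Sym2 V)) : Prop :=
  ∃ u v : V, u ≠ v ∧ B = {s(u, v)}

/-- An edge set forming a triangle `K₃`. -/
def IsK3Block {V : Type*} (B : Set (Sym2 V)) : Prop :=
  ∃ u v w : V, u ≠ v ∧ u ≠ w ∧ v ≠ w ∧ B = {s(u, v), s(v, w), s(u, w)}

/-- An edge set forming `B₄`, two triangles `u v w` and `v w x` sharing the edge `v w`
(`K₄` minus an edge). -/
def IsB4Block {V : Type*} (B : Set (Sym2 V)) : Prop :=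
  ∃ u v w x : V, u ≠ v ∧ u ≠ w ∧ u ≠ x ∧ v ≠ w ∧ v ≠ x ∧ w ≠ x ∧
    B = {s(u, v), s(u, w), s(v, w), s(v, x), s(w, x)}

/-- An edge set forming `B₅ₐ`: a path `x₁x₂x₃x₄` plus an apex `y` joined to all of
`x₁, x₂, x₃, x₄`. -/
def IsB5aBlock {V : Type*} (B : Set (Sym2 V)) : Prop :=
  ∃ y x₁ x₂ x₃ x₄ : V, y ≠ x₁ ∧ y ≠ x₂ ∧ y ≠ x₃ ∧ y ≠ x₄ ∧ x₁ ≠ x₂ ∧ x₁ ≠ x₃ ∧ x₁ ≠ x₄ ∧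
    x₂ ≠ x₃ ∧ x₂ ≠ x₄ ∧ x₃ ≠ x₄ ∧
    B = {s(y, x₁), s(y, x₂), s(y, x₃), s(y, x₄), s(x₁, x₂), s(x₂, x₃), s(x₃, x₄)}

/-- An edge set forming `B₅ᵦ`, the wheel `W₄`: a `4`-cycle `x₁x₂x₃x₄` plus a center `c`
joined to all four cycle vertices. -/
def IsB5bBlock {V : Type*} (B : Set (Sym2 V)) : Prop :=
  ∃ c x₁ x₂ x₃ x₄ : V, c ≠ x₁ ∧ c ≠ x₂ ∧ c ≠ x₃ ∧ c ≠ x₄ ∧ x₁ ≠ x₂ ∧ x₁ ≠ x₃ ∧ x₁ ≠ x₄ ∧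
    x₂ ≠ x₃ ∧ x₂ ≠ x₄ ∧ x₃ ≠ x₄ ∧
    B = {s(c, x₁), s(c, x₂), s(c, x₃), s(c, x₄), s(x₁, x₂), s(x₂, x₃), s(x₃, x₄), s(x₄, x₁)}

end PlanarTuran

open PlanarTuran

namespace PT2

variable {V : Type*} [Fintype V] [DecidableEq V] (G : SimpleGraph V) [DecidableRel G.Adj]

/-- Edges of `G` with all endpoints in `S`. -/
def edgesIn (S : Finset V) : Finset (Sym2 V) :=
  G.edgeFinset.filter (fun e => ∀ v ∈ e, v ∈ S)

/-- All unordered pairs of distinct elements of `S`. -/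
def allPairs (S : Finset V) : Finset (Sym2 V) :=
  S.sym2.filter (fun e => ¬ e.IsDiag)

variable {G}

lemma mem_edgesIn {S : Finset V} {e : Sym2 V} :
    e ∈ edgesIn G S ↔ e ∈ G.edgeFinset ∧ ∀ v ∈ e, v ∈ S := Finset.mem_filter

lemma mem_allPairs {S : Finset V} {e : Sym2 V} :
    e ∈ allPairs S ↔ e ∈ S.sym2 ∧ ¬ e.IsDiag := Finset.mem_filter

lemma edgesIn_subset_allPairs (S : Finset V) : edgesIn G S ⊆ allPairs S := by
  intro e he
  rw [mem_edgesIn] at he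
  rw [mem_allPairs, Finset.mem_sym2_iff]
  exact ⟨he.2, G.not_isDiag_of_mem_edgeSet (SimpleGraph.mem_edgeFinset.mp he.1)⟩

lemma card_allPairs (S : Finset V) : (allPairs S).card = S.card.choose 2 := by
  classical
  have hsplit := Finset.card_filter_add_card_filter_not
    (s := S.sym2) (fun e => ¬ e.IsDiag)
  have hdiag : (S.sym2.filter (fun e => ¬¬ e.IsDiag)).card = S.card := by
    have himg : S.sym2.filter (fun e => ¬¬ e.IsDiag) = S.image (fun a => s(a, a)) := by
      ext e
      simp only [Finset.mem_filter, Finset.mem_image, not_not]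
      constructor
      · rintro ⟨hmem, hdiag⟩
        induction e using Sym2.ind with
        | _ a b =>
          rw [Sym2.mk_isDiag_iff] at hdiag
          subst hdiag
          exact ⟨a, (Finset.mk_mem_sym2_iff.mp hmem).1, rfl⟩
      · rintro ⟨a, ha, rfl⟩
        exact ⟨Finset.mk_mem_sym2_iff.mpr ⟨ha, ha⟩, Sym2.mk_isDiag_iff.mpr rfl⟩
    rw [himg, Finset.card_image_of_injective _ (fun a b h => by
      simpa using Sym2.diag_injective (by simpa [Sym2.diag] using h))]
  have hcard := Finset.card_sym2 S
  have hch : (S.card + 1).choose 2 = S.card + S.card.choose 2 := by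
    rw [Nat.choose_succ_succ]
    simp [Nat.choose_one_right]
  have : (allPairs S).card + S.card = S.card + S.card.choose 2 := by
    rw [allPairs]
    omega
  omega

lemma card_edgesIn_le_choose (S : Finset V) : (edgesIn G S).card ≤ S.card.choose 2 := by
  rw [← card_allPairs S]
  exact Finset.card_le_card (edgesIn_subset_allPairs S)


set_option linter.unusedSectionVars false

lemma exists_rep {e : Sym2 V} (he : e ∈ G.edgeFinset) :
    ∃ a b, G.Adj a b ∧ e = s(a, b) := by
  induction e using Sym2.ind with
  | _ a b => exact ⟨a, b, SimpleGraph.mem_edgeFinset.mp he, rfl⟩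

/-- Turán-type bound: a `K₄`-free graph spans at most 8 edges on 5 vertices. -/
lemma card_edgesIn_le_eight (hK4 : G.CliqueFree 4) {S : Finset V} (hS : S.card = 5) :
    (edgesIn G S).card ≤ 8 := by
  by_contra hcon
  push_neg at hcon
  have hsub := edgesIn_subset_allPairs (G := G) S
  have hAP : (allPairs S).card = 10 := by rw [card_allPairs, hS]; decide
  have hN : ((allPairs S) \ (edgesIn G S)).card ≤ 1 := by
    rw [Finset.card_sdiff_of_subset hsub]
    omega
  have hSne : S.Nonempty := Finset.card_pos.mp (by omega)
  have hhit : ∃ a ∈ S, ∀ p ∈ (allPairs S) \ (edgesIn G S), a ∈ p := by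
    rcases Nat.le_one_iff_eq_zero_or_eq_one.mp hN with h0 | h1
    · obtain ⟨a, ha⟩ := hSne
      exact ⟨a, ha, fun p hp => absurd (Finset.card_eq_zero.mp h0 ▸ hp) (Finset.notMem_empty p)⟩
    · obtain ⟨p, hp⟩ := Finset.card_eq_one.mp h1
      have hpmem : p ∈ allPairs S := (Finset.mem_sdiff.mp (hp ▸ Finset.mem_singleton_self p)).1
      induction p using Sym2.ind with
      | _ c d =>
        refine ⟨c, ?_, ?_⟩
        · exact (Finset.mk_mem_sym2_iff.mp (mem_allPairs.mp hpmem).1).1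
        · intro q hq
          rw [hp, Finset.mem_singleton] at hq
          subst hq
          exact Sym2.mem_mk_left c d
  obtain ⟨a, haS, ha⟩ := hhit
  refine hK4 (S.erase a) ((SimpleGraph.isNClique_iff _).mpr ⟨?_, ?_⟩)
  · intro u hu w hw hne
    have huS : u ∈ S := Finset.mem_of_mem_erase hu
    have hwS : w ∈ S := Finset.mem_of_mem_erase hw
    have hmem : s(u, w) ∈ allPairs S :=
      mem_allPairs.mpr ⟨Finset.mk_mem_sym2_iff.mpr ⟨huS, hwS⟩, by simp [Sym2.mk_isDiag_iff, hne]⟩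
    by_cases he : s(u, w) ∈ edgesIn G S
    · exact SimpleGraph.mem_edgeFinset.mp (mem_edgesIn.mp he).1
    · have := ha _ (Finset.mem_sdiff.mpr ⟨hmem, he⟩)
      rw [Sym2.mem_iff] at this
      rcases this with rfl | rfl
      · exact absurd rfl (Finset.ne_of_mem_erase hu)
      · exact absurd rfl (Finset.ne_of_mem_erase hw)
  · rw [Finset.card_erase_of_mem haS, hS]

/-- Splitting the edge count along a separation. -/
lemma card_edgesIn_split {S A B : Finset V} (hunion : A ∪ B = S) (hcap : (A ∩ B).card ≤ 1)
    (hcond : ∀ e ∈ edgesIn G S, (∀ v ∈ e, v ∈ A) ∨ (∀ v ∈ e, v ∈ B)) :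
    (edgesIn G S).card ≤ (edgesIn G A).card + (edgesIn G B).card := by
  have hsub : edgesIn G S ⊆ edgesIn G A ∪ edgesIn G B := by
    intro e he
    rcases hcond e he with h | h
    · exact Finset.mem_union_left _ (mem_edgesIn.mpr ⟨(mem_edgesIn.mp he).1, h⟩)
    · exact Finset.mem_union_right _ (mem_edgesIn.mpr ⟨(mem_edgesIn.mp he).1, h⟩)
  have hdisj : Disjoint (edgesIn G A) (edgesIn G B) := by
    rw [Finset.disjoint_left]
    intro e heA heB
    obtain ⟨u, w, hadj, rfl⟩ := exists_rep (mem_edgesIn.mp heA).1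
    have h2 : 1 < (A ∩ B).card := by
      refine Finset.one_lt_card.mpr ⟨u, ?_, w, ?_, hadj.ne⟩
      · exact Finset.mem_inter.mpr ⟨(mem_edgesIn.mp heA).2 u (Sym2.mem_mk_left u w),
          (mem_edgesIn.mp heB).2 u (Sym2.mem_mk_left u w)⟩
      · exact Finset.mem_inter.mpr ⟨(mem_edgesIn.mp heA).2 w (Sym2.mem_mk_right u w),
          (mem_edgesIn.mp heB).2 w (Sym2.mem_mk_right u w)⟩
    omega
  calc (edgesIn G S).card ≤ (edgesIn G A ∪ edgesIn G B).card := Finset.card_le_card hsub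
    _ = (edgesIn G A).card + (edgesIn G B).card := Finset.card_union_of_disjoint hdisj



variable (G) in
/-- The subgraph of `G` induced on the finset `S`. -/
def sg (S : Finset V) : G.Subgraph where
  verts := ↑S
  Adj a b := a ∈ S ∧ b ∈ S ∧ G.Adj a b
  adj_sub h := h.2.2
  edge_vert h := h.1
  symm := ⟨fun a b h => ⟨h.2.1, h.1, h.2.2.symm⟩⟩

lemma twoconn_card_le
    (hsmall : ∀ K : G.Subgraph, K.coe.IsTwoConnected → Nat.card K.verts ≤ 5)
    {S : Finset V} (h3 : 3 ≤ S.card)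
    (hconn : ∀ v : (sg G S).verts, ((sg G S).coe.induce {u | u ≠ v}).Connected) :
    S.card ≤ 5 := by
  have hcard : Nat.card ((sg G S).verts) = S.card := by
    rw [Nat.card_coe_set_eq]
    exact Set.ncard_coe_finset S
  have h5 := hsmall (sg G S) ⟨by rw [hcard]; exact h3, hconn⟩
  omega

lemma main_bound (hK4 : G.CliqueFree 4)
    (hsmall : ∀ K : G.Subgraph, K.coe.IsTwoConnected → Nat.card K.verts ≤ 5) :
    ∀ (k : ℕ) (S : Finset V), S.card ≤ k → S.Nonempty → (edgesIn G S).card + 2 ≤ 2 * S.card := by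
  intro k
  induction k with
  | zero =>
    intro S hk hne
    have := Finset.card_pos.mpr hne
    omega
  | succ k ih =>
    intro S hk hne
    have hpos : 1 ≤ S.card := Finset.card_pos.mpr hne
    by_cases hsmallcard : S.card ≤ 2
    · have h1 := card_edgesIn_le_choose (G := G) S
      have hch : S.card.choose 2 + 2 ≤ 2 * S.card := by
        interval_cases h : S.card <;> decide
      omega
    push_neg at hsmallcard
    have h3 : 3 ≤ S.card := hsmallcard
    by_cases hcv : ∀ v : (sg G S).verts, ((sg G S).coe.induce {u | u ≠ v}).Connected
    · -- terminal 2-connected case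
      have h5 := twoconn_card_le hsmall h3 hcv
      have h1 := card_edgesIn_le_choose (G := G) S
      have h8 := fun h => card_edgesIn_le_eight hK4 (S := S) h
      interval_cases h : S.card
      · have : (3:ℕ).choose 2 = 3 := by decide
        omega
      · have : (4:ℕ).choose 2 = 6 := by decide
        omega
      · have := h8 rfl
        omega
    · push_neg at hcv
      obtain ⟨v, hv⟩ := hcv
      classical
      set Kc := (sg G S).coe with hKc
      set H := Kc.induce {u | u ≠ v} with hHdef
      have hvS : (v : V) ∈ S := by exact v.2
      -- the vertex type of H is nonempty
      obtain ⟨w0, hw0S, hw0v⟩ := Finset.exists_mem_ne (s := S) (by omega) (v : V)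
      have hWne : Nonempty ↑{u : (sg G S).verts | u ≠ v} :=
        ⟨⟨⟨w0, by exact hw0S⟩, fun h => hw0v (congrArg Subtype.val h)⟩⟩
      haveI := hWne
      have hnp : ¬ H.Preconnected := fun hp => hv ⟨hp⟩
      rw [SimpleGraph.Preconnected] at hnp
      push_neg at hnp
      obtain ⟨x, y, hxy⟩ := hnp
      obtain ⟨⟨xv, hx1⟩, hx2⟩ := x
      obtain ⟨⟨yv, hy1⟩, hy2⟩ := y
      -- the reachability class of x, as a predicate on V
      set P : V → Prop := fun u => ∃ (h1 : u ∈ ((sg G S).verts)) (h2 : (⟨u, h1⟩ : (sg G S).verts) ≠ v),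
        H.Reachable ⟨⟨xv, hx1⟩, hx2⟩ ⟨⟨u, h1⟩, h2⟩ with hPdef
      set A0 : Finset V := S.filter P with hA0def
      set B0 : Finset V := (S.erase (v : V)) \ A0 with hB0def
      set A : Finset V := insert (v : V) A0 with hAdef
      set B : Finset V := insert (v : V) B0 with hBdef
      -- A0 avoids v
      have hA0sub : A0 ⊆ S.erase (v : V) := by
        intro u hu
        obtain ⟨huS, h1, h2, _⟩ := Finset.mem_filter.mp hu
        exact Finset.mem_erase.mpr ⟨fun h => h2 (Subtype.ext h), huS⟩
      have hA0B0 : A0 ∪ B0 = S.erase (v : V) := by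
        apply Finset.Subset.antisymm
        · exact Finset.union_subset hA0sub (Finset.sdiff_subset)
        · intro u hu
          by_cases hP : P u
          · exact Finset.mem_union_left _ (Finset.mem_filter.mpr ⟨Finset.mem_of_mem_erase hu, hP⟩)
          · exact Finset.mem_union_right _ (Finset.mem_sdiff.mpr ⟨hu,
              fun hA => hP (Finset.mem_filter.mp hA).2⟩)
      have hunion : A ∪ B = S := by
        rw [hAdef, hBdef, ← Finset.insert_union_distrib, hA0B0, Finset.insert_erase hvS]
      have hinter : A ∩ B ⊆ {(v : V)} := by
        intro u hu
        obtain ⟨huA, huB⟩ := Finset.mem_inter.mp hu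
        rcases Finset.mem_insert.mp huA with rfl | huA0
        · exact Finset.mem_singleton_self _
        rcases Finset.mem_insert.mp huB with rfl | huB0
        · exact Finset.mem_singleton_self _
        exact absurd huA0 (Finset.mem_sdiff.mp huB0).2
      have hintercard : (A ∩ B).card ≤ 1 := by
        calc (A ∩ B).card ≤ ({(v : V)} : Finset V).card := Finset.card_le_card hinter
          _ = 1 := Finset.card_singleton _
      -- reachability transfers along edges avoiding v
      have hreach : ∀ a b : V, a ∈ S → b ∈ S → a ≠ (v : V) → b ≠ (v : V) → G.Adj a b →
          (P a ↔ P b) := by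
        intro a b haS hbS hav hbv hadj
        have haS' : a ∈ ((sg G S).verts) := by exact_mod_cast haS
        have hbS' : b ∈ ((sg G S).verts) := by exact_mod_cast hbS
        have ha2 : (⟨a, haS'⟩ : (sg G S).verts) ≠ v := fun h => hav (congrArg Subtype.val h)
        have hb2 : (⟨b, hbS'⟩ : (sg G S).verts) ≠ v := fun h => hbv (congrArg Subtype.val h)
        have hHadj : H.Adj ⟨⟨a, haS'⟩, ha2⟩ ⟨⟨b, hbS'⟩, hb2⟩ := by
          show Kc.Adj _ _
          rw [hKc, SimpleGraph.Subgraph.coe_adj]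
          exact ⟨haS, hbS, hadj⟩
        constructor
        · rintro ⟨h1, h2, hr⟩
          refine ⟨hbS', hb2, ?_⟩
          have heq : (⟨⟨a, h1⟩, h2⟩ : {u : (sg G S).verts // u ∈ {u | u ≠ v}})
              = ⟨⟨a, haS'⟩, ha2⟩ := Subtype.ext (Subtype.ext rfl)
          exact (heq ▸ hr).trans hHadj.reachable
        · rintro ⟨h1, h2, hr⟩
          refine ⟨haS', ha2, ?_⟩
          have heq : (⟨⟨b, h1⟩, h2⟩ : {u : (sg G S).verts // u ∈ {u | u ≠ v}})
              = ⟨⟨b, hbS'⟩, hb2⟩ := Subtype.ext (Subtype.ext rfl)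
          exact (heq ▸ hr).trans hHadj.symm.reachable
      -- every edge in S lies within A or within B
      have hcond : ∀ e ∈ edgesIn G S, (∀ w ∈ e, w ∈ A) ∨ (∀ w ∈ e, w ∈ B) := by
        intro e he
        obtain ⟨a, b, hadj, rfl⟩ := exists_rep (mem_edgesIn.mp he).1
        have haS : a ∈ S := (mem_edgesIn.mp he).2 a (Sym2.mem_mk_left a b)
        have hbS : b ∈ S := (mem_edgesIn.mp he).2 b (Sym2.mem_mk_right a b)
        have hmemAB : ∀ u : V, u ∈ S → u ≠ (v : V) → (u ∈ A0 ∨ u ∈ B0) := by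
          intro u huS huv
          have : u ∈ A0 ∪ B0 := hA0B0 ▸ Finset.mem_erase.mpr ⟨huv, huS⟩
          exact Finset.mem_union.mp this
        by_cases hav : a = (v : V)
        · subst hav
          have hbv : b ≠ (v : V) := hadj.ne.symm
          rcases hmemAB b hbS hbv with hbA | hbB
          · left
            intro w hw
            rcases Sym2.mem_iff.mp hw with rfl | rfl
            · exact Finset.mem_insert_self _ _
            · exact Finset.mem_insert_of_mem hbA
          · right
            intro w hw
            rcases Sym2.mem_iff.mp hw with rfl | rfl
            · exact Finset.mem_insert_self _ _
            · exact Finset.mem_insert_of_mem hbB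
        by_cases hbv : b = (v : V)
        · subst hbv
          rcases hmemAB a haS hav with haA | haB
          · left
            intro w hw
            rcases Sym2.mem_iff.mp hw with rfl | rfl
            · exact Finset.mem_insert_of_mem haA
            · exact Finset.mem_insert_self _ _
          · right
            intro w hw
            rcases Sym2.mem_iff.mp hw with rfl | rfl
            · exact Finset.mem_insert_of_mem haB
            · exact Finset.mem_insert_self _ _
        have hPab := hreach a b haS hbS hav hbv hadj
        by_cases hPa : P a
        · left
          intro w hw
          rcases Sym2.mem_iff.mp hw with rfl | rfl
          · exact Finset.mem_insert_of_mem (Finset.mem_filter.mpr ⟨haS, hPa⟩)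
          · exact Finset.mem_insert_of_mem (Finset.mem_filter.mpr ⟨hbS, hPab.mp hPa⟩)
        · right
          intro w hw
          rcases Sym2.mem_iff.mp hw with rfl | rfl
          · exact Finset.mem_insert_of_mem (Finset.mem_sdiff.mpr
              ⟨Finset.mem_erase.mpr ⟨hav, haS⟩, fun h => hPa (Finset.mem_filter.mp h).2⟩)
          · exact Finset.mem_insert_of_mem (Finset.mem_sdiff.mpr
              ⟨Finset.mem_erase.mpr ⟨hbv, hbS⟩,
               fun h => hPa (hPab.mpr (Finset.mem_filter.mp h).2)⟩)
      -- x belongs to A0, y belongs to B0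
      have hxA0 : xv ∈ A0 := by
        refine Finset.mem_filter.mpr ⟨by exact_mod_cast hx1, hx1, hx2, SimpleGraph.Reachable.refl _⟩
      have hyB0 : yv ∈ B0 := by
        refine Finset.mem_sdiff.mpr ⟨Finset.mem_erase.mpr
          ⟨fun h => hy2 (Subtype.ext h), by exact_mod_cast hy1⟩, ?_⟩
        intro hyA
        obtain ⟨h1, h2, hr⟩ := (Finset.mem_filter.mp hyA).2
        have heq : (⟨⟨yv, h1⟩, h2⟩ : ↑{u : (sg G S).verts | u ≠ v})
            = ⟨⟨yv, hy1⟩, hy2⟩ := Subtype.ext (Subtype.ext rfl)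
        exact hxy (heq ▸ hr)
      -- strict inclusions
      have hAsub : A ⊆ S := by
        rw [hAdef]
        exact Finset.insert_subset hvS (hA0sub.trans (Finset.erase_subset _ _))
      have hBsub : B ⊆ S := by
        rw [hBdef]
        exact Finset.insert_subset hvS ((Finset.sdiff_subset).trans (Finset.erase_subset _ _))
      have hyA : yv ∉ A := by
        intro h
        rcases Finset.mem_insert.mp h with h' | h'
        · exact (Finset.mem_erase.mp ((Finset.sdiff_subset) hyB0)).1 h'
        · exact (Finset.mem_sdiff.mp hyB0).2 h'
      have hxB : xv ∉ B := by
        intro h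
        rcases Finset.mem_insert.mp h with h' | h'
        · exact (Finset.mem_erase.mp (hA0sub hxA0)).1 h'
        · exact (Finset.mem_sdiff.mp h').2 hxA0
      have hAcard : A.card < S.card := Finset.card_lt_card
        ⟨hAsub, fun h => hyA (h (hBsub (Finset.mem_insert_of_mem hyB0)))⟩
      have hBcard : B.card < S.card := Finset.card_lt_card
        ⟨hBsub, fun h => hxB (h (hAsub (Finset.mem_insert_of_mem hxA0)))⟩
      have hsumcard : A.card + B.card ≤ S.card + 1 := by
        have := Finset.card_union_add_card_inter A B
        rw [hunion] at this
        omega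
      have ihA := ih A (by omega) ⟨(v : V), Finset.mem_insert_self _ _⟩
      have ihB := ih B (by omega) ⟨(v : V), Finset.mem_insert_self _ _⟩
      have hsplit := card_edgesIn_split hunion hintercard hcond
      omega

end PT2


/-- Let `G` be a planar graph on `n ≥ 2` vertices containing neither `K₄` nor
`C₆` as a subgraph, such that `G` contains no maximal `2`-connected subgraph on more than `5`
vertices. Then `e(G) ≤ (31/15) n - 7/3`. -/
theorem planar_K4_C6_free_small_blocks_edge_bound {V : Type*} [Fintype V] [DecidableEq V]
    (G : SimpleGraph V) [DecidableRel G.Adj]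
    (hplanar : G.IsPlanar) (hK4 : G.CliqueFree 4) (hC6 : G.CycleFree 6)
    (n : ℕ) (hn : Fintype.card V = n) (hn2 : 2 ≤ n)
    (hblocks : ∀ H : G.Subgraph,
      Maximal (fun K : G.Subgraph => K.coe.IsTwoConnected) H → Nat.card H.verts ≤ 5) :
    (G.edgeFinset.card : ℚ) ≤ 31 / 15 * (n : ℚ) - 7 / 3 := by
  classical
  have hsmall : ∀ K : G.Subgraph, K.coe.IsTwoConnected → Nat.card K.verts ≤ 5 := by
    intro K hK
    haveI : Finite G.Subgraph := Finite.of_injective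
      (fun K : G.Subgraph => (K.verts, K.Adj))
      (fun a b h => SimpleGraph.Subgraph.ext (congrArg Prod.fst h) (congrArg Prod.snd h))
    obtain ⟨Hm, hle, hmax⟩ := Finite.exists_le_maximal (a := K) (p := fun K : G.Subgraph => K.coe.IsTwoConnected) hK
    have h5 := hblocks Hm hmax
    have hsub : K.verts ⊆ Hm.verts := SimpleGraph.Subgraph.verts_mono hle
    calc Nat.card K.verts = K.verts.ncard := Nat.card_coe_set_eq _
      _ ≤ Hm.verts.ncard := Set.ncard_le_ncard hsub (Set.toFinite _)
      _ = Nat.card Hm.verts := (Nat.card_coe_set_eq _).symm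
      _ ≤ 5 := h5
  have hNV : Nonempty V := by
    rw [← Fintype.card_pos_iff]
    omega
  have huniv : (Finset.univ : Finset V).card = n := by rw [Finset.card_univ, hn]
  have hEuniv : PT2.edgesIn G Finset.univ = G.edgeFinset := by
    rw [PT2.edgesIn]
    exact Finset.filter_true_of_mem (fun e _ => fun v _ => Finset.mem_univ v)
  by_cases h5n : 5 ≤ n
  · have hmain := PT2.main_bound hK4 hsmall n Finset.univ (le_of_eq huniv) Finset.univ_nonempty
    rw [hEuniv, huniv] at hmain
    have h1 : (G.edgeFinset.card : ℚ) + 2 ≤ 2 * (n : ℚ) := by exact_mod_cast hmain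
    have h2 : (5 : ℚ) ≤ (n : ℚ) := by exact_mod_cast h5n
    linarith
  · push_neg at h5n
    interval_cases n
    · -- n = 2
      have he := G.card_edgeFinset_le_card_choose_two
      rw [hn] at he
      have hc : (2 : ℕ).choose 2 = 1 := by decide
      have h1 : G.edgeFinset.card ≤ 1 := by omega
      have h2 : (G.edgeFinset.card : ℚ) ≤ 1 := by exact_mod_cast h1
      push_cast
      linarith
    · -- n = 3
      have he := G.card_edgeFinset_le_card_choose_two
      rw [hn] at he
      have hc : (3 : ℕ).choose 2 = 3 := by decide
      have h1 : G.edgeFinset.card ≤ 3 := by omega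
      have h2 : (G.edgeFinset.card : ℚ) ≤ 3 := by exact_mod_cast h1
      push_cast
      linarith
    · -- n = 4
      have hnonadj : ∃ u w : V, u ≠ w ∧ ¬ G.Adj u w := by
        by_contra hcon
        push_neg at hcon
        exact hK4 Finset.univ ((SimpleGraph.isNClique_iff _).mpr
          ⟨fun u _ w _ hne => hcon u w hne, by rw [Finset.card_univ, hn]⟩)
      obtain ⟨u, w, hne, hnadj⟩ := hnonadj
      have hss : PT2.edgesIn G Finset.univ ⊂ PT2.allPairs Finset.univ := by
        refine ⟨PT2.edgesIn_subset_allPairs _, fun hsup => ?_⟩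
        have hm : s(u, w) ∈ PT2.allPairs (Finset.univ : Finset V) :=
          PT2.mem_allPairs.mpr ⟨Finset.mk_mem_sym2_iff.mpr ⟨Finset.mem_univ u, Finset.mem_univ w⟩,
            by simp [Sym2.mk_isDiag_iff, hne]⟩
        exact hnadj (SimpleGraph.mem_edgeFinset.mp (PT2.mem_edgesIn.mp (hsup hm)).1)
      have hlt := Finset.card_lt_card hss
      rw [hEuniv, PT2.card_allPairs, huniv] at hlt
      have hc : (4 : ℕ).choose 2 = 6 := by decide
      have h1 : G.edgeFinset.card ≤ 5 := by omega
      have h2 : (G.edgeFinset.card : ℚ) ≤ 5 := by exact_mod_cast h1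
      push_cast
      linarith
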